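/- arXiv:2412.11798 — 2 statements merged into one kernel-verified Lean document; each statement's English description precedes it below -/
import Mathlib

section
/- Let E ∈ V and E_h ∈ V_h; set e := E − E_h and η := E − P E. Assume Galerkin orthogonality b♯(e, v) = 0 for all v ∈ V_h^c and the weak-consistency bound |b♯(e, w_h)| ≤ D |w_h|_nc for all w_h ∈ V_h, where D ≥ 0. Then, with c_γ := 8 max(γ_p², ρ⁻² γ_d²) + max(1, ρ⁻²)(γ_div + 3 γ_div²), the asymptotically optimal a priori error estimate (1 − c_γ) |||e|||♯² ≤ (1 + 4 γ_div) |||η|||♯² + 2 ρ⁻¹ |||e|||♯ · D holds. -/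
open scoped RealInnerProductSpace

/-- The energy norm `|||v||| := (ω²‖v‖_L² + ‖C v‖_M²)^{1/2}`. -/
noncomputable def tnorm {L M : Type*} [NormedAddCommGroup L] [InnerProductSpace ℝ L]
    [NormedAddCommGroup M] [InnerProductSpace ℝ M]
    (ω : ℝ) (C : L →ₗ[ℝ] M) (v : L) : ℝ :=
  Real.sqrt (ω ^ 2 * ‖v‖ ^ 2 + ‖C v‖ ^ 2)

/-- The augmented energy norm `|||v|||♯ := (ω²‖v‖_L² + ‖C v‖_M² + s(v,v))^{1/2}`. -/
noncomputable def tnormS {L M : Type*} [NormedAddCommGroup L] [InnerProductSpace ℝ L]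
    [NormedAddCommGroup M] [InnerProductSpace ℝ M]
    (ω : ℝ) (C : L →ₗ[ℝ] M) (s : L →ₗ[ℝ] L →ₗ[ℝ] ℝ) (v : L) : ℝ :=
  Real.sqrt (ω ^ 2 * ‖v‖ ^ 2 + ‖C v‖ ^ 2 + s v v)

lemma cs2_aux (a b c d : ℝ) (ha : 0 ≤ a) (hb : 0 ≤ b) (hc : 0 ≤ c) (hd : 0 ≤ d) :
    a * c + b * d ≤ Real.sqrt (a ^ 2 + b ^ 2) * Real.sqrt (c ^ 2 + d ^ 2) := by
  have h1 : (a * c + b * d) ^ 2 ≤ (a ^ 2 + b ^ 2) * (c ^ 2 + d ^ 2) := by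
    nlinarith [sq_nonneg (a * d - b * c)]
  have h2 : 0 ≤ a * c + b * d := by positivity
  calc a * c + b * d = Real.sqrt ((a * c + b * d) ^ 2) := (Real.sqrt_sq h2).symm
    _ ≤ Real.sqrt ((a ^ 2 + b ^ 2) * (c ^ 2 + d ^ 2)) := Real.sqrt_le_sqrt h1
    _ = _ := Real.sqrt_mul (by positivity) _

set_option maxHeartbeats 2000000 in
/-- **Asymptotically optimal a priori error estimate.**
With `e := E − E_h`, `η := E − P E`,
`c_γ := 8 max(γ_p², ρ⁻² γ_d²) + max(1, ρ⁻²)(γ_div + 3 γ_div²)`, under Galerkin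
orthogonality on conforming test functions and the weak-consistency bound
`|b♯(e, w_h)| ≤ D |w_h|_nc` on `V_h`, one has
`(1 − c_γ) |||e|||♯² ≤ (1 + 4 γ_div) |||η|||♯² + 2 ρ⁻¹ |||e|||♯ D`. -/
theorem a_priori_error_estimate
    {L M : Type*} [NormedAddCommGroup L] [InnerProductSpace ℝ L]
    [NormedAddCommGroup M] [InnerProductSpace ℝ M]
    (ω : ℝ) (hω : 0 < ω)
    (Vs V Vh : Submodule ℝ L) (hVVs : V ≤ Vs) (hVhVs : Vh ≤ Vs)
    (C : L →ₗ[ℝ] M)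
    (s : L →ₗ[ℝ] L →ₗ[ℝ] ℝ)
    (hs_symm : ∀ v w : L, s v w = s w v)
    (hs_pos : ∀ v : L, 0 ≤ s v v)
    (hs_conf : ∀ v w : L, v ∈ V ∨ w ∈ V → s v w = 0)
    (nc : L → ℝ)
    (hnc_nonneg : ∀ v : L, 0 ≤ nc v)
    (hnc_add : ∀ v w : L, nc (v + w) ≤ nc v + nc w)
    (hnc_smul : ∀ (c : ℝ) (v : L), nc (c • v) = |c| * nc v)
    (hnc_conf : ∀ v ∈ V, nc v = 0)
    (projK : L →ₗ[ℝ] L)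
    (hprojK_mem : ∀ v : L, projK v ∈ V ∧ C (projK v) = 0)
    (hprojK_orth : ∀ v : L, ∀ w ∈ V, C w = 0 → ⟪v - projK v, w⟫ = 0)
    (projKh : L →ₗ[ℝ] L)
    (hprojKh_mem : ∀ v : L, projKh v ∈ Vh ⊓ V ∧ C (projKh v) = 0)
    (hprojKh_orth : ∀ v : L, ∀ w ∈ Vh ⊓ V, C w = 0 → ⟪v - projKh v, w⟫ = 0)
    (γp γd : ℝ) (hγp : 0 ≤ γp) (hγd : 0 ≤ γd)
    (hadj : ∀ θ : L, (∀ w ∈ V, C w = 0 → ⟪θ, w⟫ = 0) →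
      ∃ ζ ∈ V, (∀ w ∈ V, -ω ^ 2 * ⟪w, ζ⟫ + ⟪C w, C ζ⟫ = ⟪w, θ⟫) ∧
        sInf {t : ℝ | ∃ v ∈ Vh ⊓ V, t = ω * tnorm ω C (ζ - v)} ≤ γp * ‖θ‖ ∧
        ∀ wh ∈ Vh,
          ω * |⟪wh, θ⟫ - (-ω ^ 2 * ⟪wh, ζ⟫ + ⟪C wh, C ζ⟫ + s wh ζ)| ≤
            γd * ‖θ‖ * nc wh)
    (γdiv : ℝ) (hγdiv : 0 ≤ γdiv)
    (hdiv : ∀ vh ∈ Vh, projKh vh = 0 →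
      ω * ‖projK vh‖ ≤ γdiv * Real.sqrt (‖C vh‖ ^ 2 + nc vh ^ 2))
    (P : L →ₗ[ℝ] L)
    (hP_mem : ∀ v : L, P v ∈ Vh)
    (hP_orth : ∀ v : L, ∀ wh ∈ Vh,
      ω ^ 2 * ⟪v - P v, wh⟫ + ⟪C (v - P v), C wh⟫ + s (v - P v) wh = 0)
    (ρ : ℝ) (hρ : 0 < ρ)
    (hρs : ∀ vh ∈ Vh, ρ * nc vh ≤ Real.sqrt (s vh vh))
    (E : L) (hE : E ∈ V) (Eh : L) (hEh : Eh ∈ Vh)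
    (hGO : ∀ v ∈ Vh ⊓ V,
      -ω ^ 2 * ⟪E - Eh, v⟫ + ⟪C (E - Eh), C v⟫ + s (E - Eh) v = 0)
    (D : ℝ) (hD : 0 ≤ D)
    (hweak : ∀ wh ∈ Vh,
      |(-ω ^ 2 * ⟪E - Eh, wh⟫ + ⟪C (E - Eh), C wh⟫ + s (E - Eh) wh)| ≤ D * nc wh) :
    (1 - (8 * max (γp ^ 2) (ρ⁻¹ ^ 2 * γd ^ 2) +
          max 1 (ρ⁻¹ ^ 2) * (γdiv + 3 * γdiv ^ 2))) *
        (ω ^ 2 * ‖E - Eh‖ ^ 2 + ‖C (E - Eh)‖ ^ 2 + s (E - Eh) (E - Eh)) ≤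
      (1 + 4 * γdiv) *
          (ω ^ 2 * ‖E - P E‖ ^ 2 + ‖C (E - P E)‖ ^ 2 + s (E - P E) (E - P E)) +
        2 * ρ⁻¹ * tnormS ω C s (E - Eh) * D := by
  -- opaque abbreviations
  obtain ⟨e, he⟩ : ∃ x : L, x = E - Eh := ⟨_, rfl⟩
  obtain ⟨η, hη⟩ : ∃ x : L, x = E - P E := ⟨_, rfl⟩
  obtain ⟨ψ, hψd⟩ : ∃ x : L, x = P E - Eh := ⟨_, rfl⟩
  rw [← he] at hGO hweak
  rw [← he, ← hη]
  have heψ : e = η + ψ := by rw [he, hη, hψd]; abel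
  have hψVh : ψ ∈ Vh := by rw [hψd]; exact Vh.sub_mem (hP_mem E) hEh
  obtain ⟨A2, hA2d⟩ : ∃ x : ℝ, x = ω ^ 2 * ‖η‖ ^ 2 + ‖C η‖ ^ 2 + s η η := ⟨_, rfl⟩
  obtain ⟨S2, hS2d⟩ : ∃ x : ℝ, x = ω ^ 2 * ‖ψ‖ ^ 2 + ‖C ψ‖ ^ 2 + s ψ ψ := ⟨_, rfl⟩
  obtain ⟨T, hTd⟩ : ∃ x : ℝ, x = ω ^ 2 * ‖e‖ ^ 2 + ‖C e‖ ^ 2 + s e e := ⟨_, rfl⟩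
  rw [← hA2d, ← hTd]
  have hA2n : 0 ≤ A2 := by
    rw [hA2d]; have := hs_pos η; positivity
  have hS2n : 0 ≤ S2 := by
    rw [hS2d]; have := hs_pos ψ; positivity
  have hTn : 0 ≤ T := by
    rw [hTd]; have := hs_pos e; positivity
  have horth : ω ^ 2 * ⟪η, ψ⟫ + ⟪C η, C ψ⟫ + s η ψ = 0 := by
    have h := hP_orth E ψ hψVh
    rw [← hη] at h
    exact h
  have hTsum : T = A2 + S2 := by
    have h1 : ‖e‖ ^ 2 = ‖η‖ ^ 2 + 2 * ⟪η, ψ⟫ + ‖ψ‖ ^ 2 := by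
      rw [heψ]; exact norm_add_sq_real η ψ
    have h2 : ‖C e‖ ^ 2 = ‖C η‖ ^ 2 + 2 * ⟪C η, C ψ⟫ + ‖C ψ‖ ^ 2 := by
      rw [heψ, map_add]; exact norm_add_sq_real _ _
    have h3 : s e e = s η η + 2 * s η ψ + s ψ ψ := by
      rw [heψ]; simp only [map_add, LinearMap.add_apply]
      rw [hs_symm ψ η]; ring
    rw [hTd, hA2d, hS2d]
    linear_combination ω ^ 2 * h1 + h2 + h3 + 2 * horth
  -- K-projection of ψ
  obtain ⟨hkV, hkC⟩ := hprojK_mem ψ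
  obtain ⟨k, hkd⟩ : ∃ x : L, x = projK ψ := ⟨_, rfl⟩
  rw [← hkd] at hkV hkC
  obtain ⟨θp, hθd⟩ : ∃ x : L, x = ψ - k := ⟨_, rfl⟩
  have hip : ⟪θp, k⟫ = 0 := by
    have hkC' : C (projK ψ) = 0 := by rw [← hkd]; exact hkC
    have h := hprojK_orth ψ k hkV (by rw [hkd]; exact hkC')
    rw [← hkd, ← hθd] at h
    exact h
  have hψθk : ψ = θp + k := by rw [hθd]; abel
  have hnψ : ‖ψ‖ ^ 2 = ‖θp‖ ^ 2 + ‖k‖ ^ 2 := by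
    nth_rewrite 1 [hψθk]
    rw [norm_add_sq_real, hip]; ring
  obtain ⟨q, hqd⟩ : ∃ x : ℝ, x = ω * ‖k‖ := ⟨_, rfl⟩
  obtain ⟨u, hud⟩ : ∃ x : ℝ, x = ω * ‖θp‖ := ⟨_, rfl⟩
  obtain ⟨z, hzd⟩ : ∃ x : ℝ, x = ω * ‖η‖ := ⟨_, rfl⟩
  obtain ⟨w2, hw2d⟩ : ∃ x : ℝ, x = ‖C ψ‖ ^ 2 + s ψ ψ := ⟨_, rfl⟩
  have huqw : u ^ 2 + q ^ 2 + w2 = S2 := by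
    rw [hud, hqd, hw2d, hS2d]
    linear_combination (-(ω ^ 2)) * hnψ
  have hun : 0 ≤ u := by rw [hud]; positivity
  have hqn : 0 ≤ q := by rw [hqd]; positivity
  have hzn : 0 ≤ z := by rw [hzd]; positivity
  have hw2n : 0 ≤ w2 := by rw [hw2d]; have := hs_pos ψ; positivity
  -- projKh ψ = 0
  have hkh0 : projKh ψ = 0 := by
    obtain ⟨hkhm, hkhC⟩ := hprojKh_mem ψ
    have hkhV : projKh ψ ∈ V := (Submodule.mem_inf.mp hkhm).2
    have hkhVh : projKh ψ ∈ Vh := (Submodule.mem_inf.mp hkhm).1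
    have h1 : ⟪ψ - projKh ψ, projKh ψ⟫ = 0 := hprojKh_orth ψ (projKh ψ) hkhm hkhC
    have hGOk := hGO (projKh ψ) hkhm
    have hsek : s e (projKh ψ) = 0 := hs_conf e (projKh ψ) (Or.inr hkhV)
    have hCek : ⟪C e, C (projKh ψ)⟫ = (0:ℝ) := by rw [hkhC]; exact inner_zero_right _
    have hek : ⟪e, projKh ψ⟫ = 0 := by
      have h3 : -ω ^ 2 * ⟪e, projKh ψ⟫ = 0 := by
        linear_combination hGOk - hCek - hsek
      rcases mul_eq_zero.mp h3 with h | h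
      · exact absurd (neg_eq_zero.mp h) (by positivity)
      · exact h
    have hηk : ⟪η, projKh ψ⟫ = 0 := by
      have h4 := hP_orth E (projKh ψ) hkhVh
      rw [← hη] at h4
      have hsηk : s η (projKh ψ) = 0 := hs_conf η (projKh ψ) (Or.inr hkhV)
      have hCηk : ⟪C η, C (projKh ψ)⟫ = (0:ℝ) := by rw [hkhC]; exact inner_zero_right _
      have h3 : ω ^ 2 * ⟪η, projKh ψ⟫ = 0 := by
        linear_combination h4 - hCηk - hsηk
      rcases mul_eq_zero.mp h3 with h | h
      · exact absurd h (by positivity)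
      · exact h
    have hψeη : ψ = e - η := by rw [heψ]; abel
    have hψk : ⟪ψ, projKh ψ⟫ = 0 := by
      have h6 : (⟪ψ, projKh ψ⟫:ℝ) = ⟪e - η, projKh ψ⟫ := by rw [← hψeη]
      rw [h6, inner_sub_left, hek, hηk]; ring
    have h5 : ⟪projKh ψ, projKh ψ⟫ = (0:ℝ) := by
      rw [inner_sub_left, hψk] at h1; linarith
    exact inner_self_eq_zero.mp h5
  -- q bound
  have hq2 : q ^ 2 ≤ γdiv ^ 2 * (max 1 (ρ⁻¹ ^ 2) * w2) := by
    have hqb := hdiv ψ hψVh hkh0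
    rw [← hkd, ← hqd] at hqb
    have hXn : (0:ℝ) ≤ ‖C ψ‖ ^ 2 + nc ψ ^ 2 := by positivity
    have h1 : q ^ 2 ≤ γdiv ^ 2 * (‖C ψ‖ ^ 2 + nc ψ ^ 2) := by
      have h2 := mul_self_le_mul_self hqn hqb
      have h3 : (γdiv * Real.sqrt (‖C ψ‖ ^ 2 + nc ψ ^ 2)) *
          (γdiv * Real.sqrt (‖C ψ‖ ^ 2 + nc ψ ^ 2)) = γdiv ^ 2 * (‖C ψ‖ ^ 2 + nc ψ ^ 2) := by
        rw [mul_mul_mul_comm, Real.mul_self_sqrt hXn]; ring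
      calc q ^ 2 = q * q := sq q
        _ ≤ _ := h2
        _ = _ := h3
    have hnc2 : nc ψ ^ 2 ≤ ρ⁻¹ ^ 2 * s ψ ψ := by
      have h2 := hρs ψ hψVh
      have h3 : (ρ * nc ψ) ^ 2 ≤ s ψ ψ := by
        have h4 := mul_self_le_mul_self (mul_nonneg hρ.le (hnc_nonneg ψ)) h2
        calc (ρ * nc ψ) ^ 2 = (ρ * nc ψ) * (ρ * nc ψ) := sq _
          _ ≤ Real.sqrt (s ψ ψ) * Real.sqrt (s ψ ψ) := h4
          _ = s ψ ψ := Real.mul_self_sqrt (hs_pos ψ)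
      have hρ2 : (0:ℝ) < ρ ^ 2 := by positivity
      have hone : ρ ^ 2 * ρ⁻¹ ^ 2 = 1 := by
        rw [← mul_pow, mul_inv_cancel₀ hρ.ne', one_pow]
      have h5 : ρ ^ 2 * (nc ψ ^ 2) ≤ ρ ^ 2 * (ρ⁻¹ ^ 2 * s ψ ψ) := by
        have hid : ρ ^ 2 * (ρ⁻¹ ^ 2 * s ψ ψ) = s ψ ψ := by
          rw [← mul_assoc, hone, one_mul]
        have h6 : ρ ^ 2 * (nc ψ ^ 2) = (ρ * nc ψ) ^ 2 := by ring
        rw [hid, h6]; exact h3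
      exact le_of_mul_le_mul_left h5 hρ2
    have hm1 : (1:ℝ) ≤ max 1 (ρ⁻¹ ^ 2) := le_max_left _ _
    have hm2 : ρ⁻¹ ^ 2 ≤ max 1 (ρ⁻¹ ^ 2) := le_max_right _ _
    have hcψ : (0:ℝ) ≤ ‖C ψ‖ ^ 2 := by positivity
    have hsψ := hs_pos ψ
    have hX : ‖C ψ‖ ^ 2 + nc ψ ^ 2 ≤ max 1 (ρ⁻¹ ^ 2) * w2 := by
      rw [hw2d, mul_add]
      have ha : ‖C ψ‖ ^ 2 ≤ max 1 (ρ⁻¹ ^ 2) * ‖C ψ‖ ^ 2 := le_mul_of_one_le_left hcψ hm1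
      have hb : nc ψ ^ 2 ≤ max 1 (ρ⁻¹ ^ 2) * s ψ ψ :=
        hnc2.trans (mul_le_mul_of_nonneg_right hm2 hsψ)
      linarith
    calc q ^ 2 ≤ γdiv ^ 2 * (‖C ψ‖ ^ 2 + nc ψ ^ 2) := h1
      _ ≤ γdiv ^ 2 * (max 1 (ρ⁻¹ ^ 2) * w2) := mul_le_mul_of_nonneg_left hX (sq_nonneg _)
  have hz2 : z ^ 2 ≤ A2 := by
    rw [hzd, hA2d]
    have h0 : (0:ℝ) ≤ ‖C η‖ ^ 2 := by positivity
    nlinarith [hs_pos η]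
  -- Z, W, bψ
  obtain ⟨Z, hZd⟩ : ∃ x : ℝ, x = ω ^ 2 * ⟪η, k⟫ := ⟨_, rfl⟩
  obtain ⟨W, hWd⟩ : ∃ x : ℝ, x = ω ^ 2 * ⟪e, θp⟫ := ⟨_, rfl⟩
  obtain ⟨bψ, hbψd⟩ : ∃ x : ℝ, x = -ω ^ 2 * ⟪e, ψ⟫ + ⟪C e, C ψ⟫ + s e ψ := ⟨_, rfl⟩
  have hZb : Z ≤ z * q := by
    rw [hZd, hzd, hqd]
    have h1 : ⟪η, k⟫ ≤ ‖η‖ * ‖k‖ := real_inner_le_norm η k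
    calc ω ^ 2 * ⟪η, k⟫ ≤ ω ^ 2 * (‖η‖ * ‖k‖) :=
          mul_le_mul_of_nonneg_left h1 (sq_nonneg ω)
      _ = (ω * ‖η‖) * (ω * ‖k‖) := by ring
  have hSid : S2 = bψ + 2 * W + 2 * Z + 2 * q ^ 2 := by
    have e1 : (⟪e, θp⟫:ℝ) = ⟪e, ψ⟫ - ⟪e, k⟫ := by rw [hθd, inner_sub_right]
    have e2 : (⟪e, ψ⟫:ℝ) = ⟪η, ψ⟫ + ⟪ψ, ψ⟫ := by rw [heψ, inner_add_left]
    have e3 : (⟪e, k⟫:ℝ) = ⟪η, k⟫ + ⟪ψ, k⟫ := by rw [heψ, inner_add_left]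
    have e4 : (⟪ψ, k⟫:ℝ) = ⟪θp, k⟫ + ⟪k, k⟫ := by
      nth_rewrite 1 [hψθk]; rw [inner_add_left]
    have e5 : (⟪C e, C ψ⟫:ℝ) = ⟪C η, C ψ⟫ + ‖C ψ‖ ^ 2 := by
      rw [heψ, map_add, inner_add_left, real_inner_self_eq_norm_sq]
    have e6 : s e ψ = s η ψ + s ψ ψ := by
      rw [heψ]; simp only [map_add, LinearMap.add_apply]
    have e7 : (⟪ψ, ψ⟫:ℝ) = ‖ψ‖ ^ 2 := real_inner_self_eq_norm_sq ψ
    have e8 : (⟪k, k⟫:ℝ) = ‖k‖ ^ 2 := real_inner_self_eq_norm_sq k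
    rw [hS2d, hbψd, hWd, hZd, hqd, e1, e2, e3, e4, e5, e6, e7, e8]
    linear_combination (-1 : ℝ) * horth + 2 * ω ^ 2 * hip
  -- B and the D-term bound
  obtain ⟨B, hBd⟩ : ∃ x : ℝ, x = Real.sqrt T := ⟨_, rfl⟩
  have hBn : 0 ≤ B := by rw [hBd]; exact Real.sqrt_nonneg _
  have hB2 : B ^ 2 = T := by rw [hBd]; exact Real.sq_sqrt hTn
  have htn : tnormS ω C s e = B := by rw [hBd, hTd]; rfl
  rw [htn]
  have hbψb : bψ ≤ D * (ρ⁻¹ * B) := by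
    have h1 := hweak ψ hψVh
    rw [← hbψd] at h1
    have h2 : nc ψ ≤ ρ⁻¹ * Real.sqrt (s ψ ψ) := by
      have h3 := hρs ψ hψVh
      have h4 : nc ψ = ρ⁻¹ * (ρ * nc ψ) := by
        rw [← mul_assoc, inv_mul_cancel₀ hρ.ne', one_mul]
      rw [h4]
      exact mul_le_mul_of_nonneg_left h3 (by positivity)
    have h5 : Real.sqrt (s ψ ψ) ≤ B := by
      rw [hBd]
      apply Real.sqrt_le_sqrt
      have h6 : (0:ℝ) ≤ ω ^ 2 * ‖ψ‖ ^ 2 := by positivity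
      have h7 : (0:ℝ) ≤ ‖C ψ‖ ^ 2 := by positivity
      rw [hTsum, hS2d]; linarith
    calc bψ ≤ |bψ| := le_abs_self _
      _ ≤ D * nc ψ := h1
      _ ≤ D * (ρ⁻¹ * B) := by
          apply mul_le_mul_of_nonneg_left _ hD
          exact h2.trans (mul_le_mul_of_nonneg_left h5 (by positivity))
  -- duality
  obtain ⟨F, hFd⟩ : ∃ x : ℝ, x = Real.sqrt (ω ^ 2 * ‖e‖ ^ 2 + ‖C e‖ ^ 2) := ⟨_, rfl⟩
  have hFn : 0 ≤ F := by rw [hFd]; exact Real.sqrt_nonneg _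
  have hF2 : F ^ 2 = ω ^ 2 * ‖e‖ ^ 2 + ‖C e‖ ^ 2 := by
    rw [hFd]; exact Real.sq_sqrt (by positivity)
  obtain ⟨al, hald⟩ : ∃ x : ℝ, x = Real.sqrt (γp ^ 2 + ρ⁻¹ ^ 2 * γd ^ 2) := ⟨_, rfl⟩
  have haln : 0 ≤ al := by rw [hald]; exact Real.sqrt_nonneg _
  have hal2 : al ^ 2 = γp ^ 2 + ρ⁻¹ ^ 2 * γd ^ 2 := by
    rw [hald]; exact Real.sq_sqrt (by positivity)
  have hWb : ∀ ε : ℝ, 0 < ε → W ≤ al * B * u + ε * (ω * F) := by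
    intro ε hε
    have hθorth : ∀ wv ∈ V, C wv = 0 → ⟪θp, wv⟫ = 0 := by
      intro wv hwv hcwv
      have h := hprojK_orth ψ wv hwv hcwv
      rw [← hkd, ← hθd] at h
      exact h
    obtain ⟨ζ, hζV, hPDE, hinf, hcons⟩ := hadj θp hθorth
    -- choose v
    have hne : Set.Nonempty {t : ℝ | ∃ v ∈ Vh ⊓ V, t = ω * tnorm ω C (ζ - v)} :=
      ⟨ω * tnorm ω C (ζ - 0), 0, Submodule.zero_mem _, rfl⟩
    have hbb : BddBelow {t : ℝ | ∃ v ∈ Vh ⊓ V, t = ω * tnorm ω C (ζ - v)} := by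
      refine ⟨0, ?_⟩
      rintro t ⟨v, hv, rfl⟩
      have h0 : 0 ≤ tnorm ω C (ζ - v) := Real.sqrt_nonneg _
      positivity
    have hlt : sInf {t : ℝ | ∃ v ∈ Vh ⊓ V, t = ω * tnorm ω C (ζ - v)} < γp * ‖θp‖ + ε :=
      lt_of_le_of_lt hinf (by linarith)
    obtain ⟨tv, ⟨v, hvm, rfl⟩, hvlt⟩ := (csInf_lt_iff hbb hne).mp hlt
    have hvVh : v ∈ Vh := (Submodule.mem_inf.mp hvm).1
    have hvV : v ∈ V := (Submodule.mem_inf.mp hvm).2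
    have hGOv := hGO v hvm
    have hPDEE := hPDE E hE
    have hsEζ : s E ζ = 0 := hs_conf E ζ (Or.inl hE)
    have hseζv : s e (ζ - v) = 0 := hs_conf e (ζ - v) (Or.inr (V.sub_mem hζV hvV))
    -- identity
    have hWid : W = ω ^ 2 * (-ω ^ 2 * ⟪e, ζ - v⟫ + ⟪C e, C (ζ - v)⟫) +
        ω ^ 2 * ((-ω ^ 2 * ⟪Eh, ζ⟫ + ⟪C Eh, C ζ⟫ + s Eh ζ) - ⟪Eh, θp⟫) := by
      have g1 : (⟪e, ζ - v⟫:ℝ) = ⟪e, ζ⟫ - ⟪e, v⟫ := inner_sub_right e ζ v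
      have g2 : (⟪C e, C (ζ - v)⟫:ℝ) = ⟪C e, C ζ⟫ - ⟪C e, C v⟫ := by
        rw [map_sub, inner_sub_right]
      have g3 : s e (ζ - v) = s e ζ - s e v := by rw [map_sub]
      have g4 : (⟪e, ζ⟫:ℝ) = ⟪E, ζ⟫ - ⟪Eh, ζ⟫ := by rw [he, inner_sub_left]
      have g5 : (⟪C e, C ζ⟫:ℝ) = ⟪C E, C ζ⟫ - ⟪C Eh, C ζ⟫ := by
        rw [he, map_sub, inner_sub_left]
      have g6 : s e ζ = s E ζ - s Eh ζ := by
        rw [he]; simp only [map_sub, LinearMap.sub_apply]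
      have g7 : (⟪e, θp⟫:ℝ) = ⟪E, θp⟫ - ⟪Eh, θp⟫ := by rw [he, inner_sub_left]
      have hsv : s e (ζ - v) = 0 := hseζv
      rw [hWd, g7, g1, g2]
      rw [g3] at hsv
      linear_combination (-(ω ^ 2)) * hPDEE + ω ^ 4 * g4 + (-(ω ^ 2)) * g5 +
        ω ^ 2 * hGOv + (-(ω ^ 2)) * g6 + ω ^ 2 * hsv + (-(ω ^ 2)) * hsEζ
    -- Cauchy–Schwarz bound for the first term
    have hCS1 : -ω ^ 2 * ⟪e, ζ - v⟫ + ⟪C e, C (ζ - v)⟫ ≤ F * tnorm ω C (ζ - v) := by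
      have h1 : -⟪e, ζ - v⟫ ≤ ‖e‖ * ‖ζ - v‖ := by
        have h := abs_real_inner_le_norm e (ζ - v)
        have h' := neg_abs_le (⟪e, ζ - v⟫:ℝ)
        linarith
      have h2 : (⟪C e, C (ζ - v)⟫:ℝ) ≤ ‖C e‖ * ‖C (ζ - v)‖ := real_inner_le_norm _ _
      have h3 := cs2_aux (ω * ‖e‖) ‖C e‖ (ω * ‖ζ - v‖) ‖C (ζ - v)‖ (by positivity)
        (norm_nonneg _) (by positivity) (norm_nonneg _)
      have h4 : Real.sqrt ((ω * ‖e‖) ^ 2 + ‖C e‖ ^ 2) = F := by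
        rw [hFd]; congr 1; ring
      have h5 : Real.sqrt ((ω * ‖ζ - v‖) ^ 2 + ‖C (ζ - v)‖ ^ 2) = tnorm ω C (ζ - v) := by
        rw [tnorm]; congr 1; ring
      rw [h4, h5] at h3
      have h1' := mul_le_mul_of_nonneg_left h1 (sq_nonneg ω)
      calc -ω ^ 2 * ⟪e, ζ - v⟫ + ⟪C e, C (ζ - v)⟫
          = ω ^ 2 * -⟪e, ζ - v⟫ + ⟪C e, C (ζ - v)⟫ := by ring
        _ ≤ ω ^ 2 * (‖e‖ * ‖ζ - v‖) + ‖C e‖ * ‖C (ζ - v)‖ := add_le_add h1' h2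
        _ = (ω * ‖e‖) * (ω * ‖ζ - v‖) + ‖C e‖ * ‖C (ζ - v)‖ := by ring
        _ ≤ F * tnorm ω C (ζ - v) := h3
    have hb1 : ω ^ 2 * (-ω ^ 2 * ⟪e, ζ - v⟫ + ⟪C e, C (ζ - v)⟫) ≤ ω * F * (γp * ‖θp‖ + ε) := by
      have h7 := mul_le_mul_of_nonneg_left hCS1 (sq_nonneg ω)
      have h8 : ω ^ 2 * (F * tnorm ω C (ζ - v)) = (ω * F) * (ω * tnorm ω C (ζ - v)) := by ring
      have h9 : (ω * F) * (ω * tnorm ω C (ζ - v)) ≤ (ω * F) * (γp * ‖θp‖ + ε) :=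
        mul_le_mul_of_nonneg_left hvlt.le (by positivity)
      calc ω ^ 2 * (-ω ^ 2 * ⟪e, ζ - v⟫ + ⟪C e, C (ζ - v)⟫)
          ≤ ω ^ 2 * (F * tnorm ω C (ζ - v)) := h7
        _ = (ω * F) * (ω * tnorm ω C (ζ - v)) := h8
        _ ≤ ω * F * (γp * ‖θp‖ + ε) := h9
    have hb2 : ω ^ 2 * ((-ω ^ 2 * ⟪Eh, ζ⟫ + ⟪C Eh, C ζ⟫ + s Eh ζ) - ⟪Eh, θp⟫) ≤
        ω * (γd * ‖θp‖ * nc Eh) := by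
      have h8 := hcons Eh hEh
      have h9 : (-ω ^ 2 * ⟪Eh, ζ⟫ + ⟪C Eh, C ζ⟫ + s Eh ζ) - ⟪Eh, θp⟫ ≤
          |⟪Eh, θp⟫ - (-ω ^ 2 * ⟪Eh, ζ⟫ + ⟪C Eh, C ζ⟫ + s Eh ζ)| := by
        rw [abs_sub_comm]; exact le_abs_self _
      have h10 : ω * ((-ω ^ 2 * ⟪Eh, ζ⟫ + ⟪C Eh, C ζ⟫ + s Eh ζ) - ⟪Eh, θp⟫) ≤
          γd * ‖θp‖ * nc Eh :=
        le_trans (mul_le_mul_of_nonneg_left h9 hω.le) h8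
      have h11 : ω ^ 2 * ((-ω ^ 2 * ⟪Eh, ζ⟫ + ⟪C Eh, C ζ⟫ + s Eh ζ) - ⟪Eh, θp⟫) =
          ω * (ω * ((-ω ^ 2 * ⟪Eh, ζ⟫ + ⟪C Eh, C ζ⟫ + s Eh ζ) - ⟪Eh, θp⟫)) := by ring
      rw [h11]
      exact mul_le_mul_of_nonneg_left h10 hω.le
    -- nc Eh bound
    have hsEh : s Eh Eh = s e e := by
      have hEh_e : (Eh : L) = E - e := by rw [he]; abel
      have h12 : s Eh Eh = s (E - e) (E - e) := by rw [← hEh_e]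
      rw [h12]
      simp only [map_sub, LinearMap.sub_apply]
      have c1 : s E E = 0 := hs_conf E E (Or.inl hE)
      have c2 : s E e = 0 := hs_conf E e (Or.inl hE)
      have c3 : s e E = 0 := hs_conf e E (Or.inr hE)
      linarith
    have hncEh : nc Eh ≤ ρ⁻¹ * Real.sqrt (s e e) := by
      have h11 := hρs Eh hEh
      rw [hsEh] at h11
      have h12 : nc Eh = ρ⁻¹ * (ρ * nc Eh) := by
        rw [← mul_assoc, inv_mul_cancel₀ hρ.ne', one_mul]
      rw [h12]
      exact mul_le_mul_of_nonneg_left h11 (by positivity)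
    -- assemble
    have hst : W ≤ γp * F * u + γd * u * nc Eh + ε * (ω * F) := by
      calc W = _ := hWid
        _ ≤ ω * F * (γp * ‖θp‖ + ε) + ω * (γd * ‖θp‖ * nc Eh) := add_le_add hb1 hb2
        _ = γp * F * u + γd * u * nc Eh + ε * (ω * F) := by rw [hud]; ring
    have hst2 : γd * u * nc Eh ≤ γd * u * (ρ⁻¹ * Real.sqrt (s e e)) :=
      mul_le_mul_of_nonneg_left hncEh (mul_nonneg hγd hun)
    have hcs := cs2_aux γp (γd * ρ⁻¹) F (Real.sqrt (s e e)) hγp (by positivity) hFn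
      (Real.sqrt_nonneg _)
    have hse1 : Real.sqrt (γp ^ 2 + (γd * ρ⁻¹) ^ 2) = al := by
      rw [hald]; congr 1; ring
    have hse2 : Real.sqrt (F ^ 2 + Real.sqrt (s e e) ^ 2) = B := by
      rw [Real.sq_sqrt (hs_pos e), hF2, hBd, hTd]
    rw [hse1, hse2] at hcs
    have hst4 : u * (γp * F + γd * ρ⁻¹ * Real.sqrt (s e e)) ≤ u * (al * B) :=
      mul_le_mul_of_nonneg_left hcs hun
    have hst5 : γp * F * u + γd * u * (ρ⁻¹ * Real.sqrt (s e e)) =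
        u * (γp * F + γd * ρ⁻¹ * Real.sqrt (s e e)) := by ring
    have hst6 : u * (al * B) = al * B * u := by ring
    linarith only [hst, hst2, hst4, hst5, hst6]
  -- abbreviate the constants
  obtain ⟨Mb, hMb⟩ : ∃ x : ℝ, x = max (γp ^ 2) (ρ⁻¹ ^ 2 * γd ^ 2) := ⟨_, rfl⟩
  obtain ⟨mm, hmm⟩ : ∃ x : ℝ, x = max 1 (ρ⁻¹ ^ 2) := ⟨_, rfl⟩
  rw [← hMb, ← hmm]
  rw [← hmm] at hq2
  have hmm1 : (1:ℝ) ≤ mm := by rw [hmm]; exact le_max_left _ _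
  have hMb2 : al ^ 2 ≤ 2 * Mb := by
    have h1 : γp ^ 2 ≤ Mb := by rw [hMb]; exact le_max_left _ _
    have h2 : ρ⁻¹ ^ 2 * γd ^ 2 ≤ Mb := by rw [hMb]; exact le_max_right _ _
    linarith only [hal2, h1, h2]
  have hw2T : w2 ≤ T := by
    linarith only [hTsum, huqw, hA2n, sq_nonneg u, sq_nonneg q]
  -- Young-type bound for the z·q term
  have h4zq : 4 * z * q ≤ 4 * γdiv * A2 + γdiv * (mm * w2) := by
    rcases eq_or_lt_of_le hγdiv with hg | hg
    · have hq0 : q = 0 := by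
        have h1 : q ^ 2 ≤ 0 := by
          rw [← hg] at hq2
          nlinarith only [hq2]
        have h2 : q ^ 2 = 0 := le_antisymm h1 (sq_nonneg q)
        exact pow_eq_zero_iff two_ne_zero |>.mp h2
      rw [hq0, ← hg]; norm_num
    · have key : γdiv * (4 * z * q) ≤ γdiv * (4 * γdiv * A2 + γdiv * (mm * w2)) := by
        have c1 := sq_nonneg (2 * γdiv * z - q)
        have c2 : 4 * γdiv ^ 2 * (z ^ 2) ≤ 4 * γdiv ^ 2 * A2 :=
          mul_le_mul_of_nonneg_left hz2 (by positivity)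
        have c3 : q ^ 2 ≤ γdiv ^ 2 * (mm * w2) := hq2
        nlinarith only [c1, c2, c3]
      exact le_of_mul_le_mul_left key hg
  -- the ε-family of final bounds
  have hkey : ∀ ε : ℝ, 0 < ε →
      (1 - (8 * Mb + mm * (γdiv + 3 * γdiv ^ 2))) * T ≤
        (1 + 4 * γdiv) * A2 + 2 * ρ⁻¹ * B * D + ε * (4 * ω * F) := by
    intro ε hε
    have hWε := hWb ε hε
    have hst1 : 2 * (al * B) * u ≤ 2 * (al * B) ^ 2 + u ^ 2 / 2 := by
      nlinarith only [sq_nonneg (2 * (al * B) - u)]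
    have hSb : S2 ≤ D * (ρ⁻¹ * B) + 2 * (al * B * u + ε * (ω * F)) + 2 * (z * q) + 2 * q ^ 2 := by
      linarith only [hSid, hbψb, hWε, hZb]
    have hchain : S2 ≤ 2 * (D * (ρ⁻¹ * B)) + 4 * (ε * (ω * F)) + 4 * (al * B) ^ 2 +
        3 * q ^ 2 + 4 * (z * q) - w2 := by
      linarith only [hSb, hst1, huqw]
    have hαB : 4 * (al * B) ^ 2 ≤ 8 * Mb * T := by
      have h1 : (al * B) ^ 2 = al ^ 2 * T := by rw [mul_pow, hB2]
      have h2 : al ^ 2 * T ≤ 2 * Mb * T := mul_le_mul_of_nonneg_right hMb2 hTn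
      linarith only [h1, h2]
    have h3q : 3 * q ^ 2 ≤ 3 * (γdiv ^ 2 * (mm * w2)) := by linarith only [hq2]
    have hgw : γdiv * (mm * w2) + 3 * (γdiv ^ 2 * (mm * w2)) ≤ mm * (γdiv + 3 * γdiv ^ 2) * T := by
      have h1 : γdiv * (mm * w2) + 3 * (γdiv ^ 2 * (mm * w2)) =
          (mm * (γdiv + 3 * γdiv ^ 2)) * w2 := by ring
      rw [h1]
      exact mul_le_mul_of_nonneg_left hw2T
        (mul_nonneg (by linarith only [hmm1]) (by positivity))
    have hfin : S2 ≤ 8 * Mb * T + mm * (γdiv + 3 * γdiv ^ 2) * T + 4 * γdiv * A2 +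
        2 * (ρ⁻¹ * B * D) + ε * (4 * ω * F) := by
      linarith only [hchain, hαB, h3q, h4zq, hgw, hw2n]
    linarith only [hfin, hTsum, hA2n]
  -- pass to the limit ε → 0
  refine le_of_forall_pos_le_add fun ε' hε' => ?_
  have hωF : (0:ℝ) ≤ ω * F := mul_nonneg hω.le hFn
  have hden : (0:ℝ) < 4 * ω * F + 1 := by linarith only [hωF]
  have h := hkey (ε' / (4 * ω * F + 1)) (div_pos hε' hden)
  have hb : (ε' / (4 * ω * F + 1)) * (4 * ω * F) ≤ ε' := by
    rw [div_mul_eq_mul_div, div_le_iff₀ hden]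
    nlinarith only [hωF, hε'.le]
  linarith only [h, hb]
end

section
/- Assume V_h is finite-dimensional and that c_γ := 8 max(γ_p², ρ⁻² γ_d²) + max(1, ρ⁻²)(γ_div + 3 γ_div²) < 1. Then the discrete problem is well-posed: for every linear functional F : V_h → ℝ there exists a unique E_h ∈ V_h such that b♯(E_h, w_h) = F(w_h) for all w_h ∈ V_h. In particular, the only E_h ∈ V_h with b♯(E_h, w_h) = 0 for all w_h ∈ V_h is E_h = 0. -/
open scoped RealInnerProductSpace

lemma tnorm_nonneg {L M : Type*} [NormedAddCommGroup L] [InnerProductSpace ℝ L]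
    [NormedAddCommGroup M] [InnerProductSpace ℝ M]
    (ω : ℝ) (C : L →ₗ[ℝ] M) (v : L) : 0 ≤ tnorm ω C v :=
  Real.sqrt_nonneg _

lemma tnorm_sq {L M : Type*} [NormedAddCommGroup L] [InnerProductSpace ℝ L]
    [NormedAddCommGroup M] [InnerProductSpace ℝ M]
    (ω : ℝ) (C : L →ₗ[ℝ] M) (v : L) :
    tnorm ω C v ^ 2 = ω ^ 2 * ‖v‖ ^ 2 + ‖C v‖ ^ 2 :=
  Real.sq_sqrt (by positivity)

/-- Two-dimensional Cauchy–Schwarz for nonnegative reals. -/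
lemma cs2 (p q r t : ℝ) (hp : 0 ≤ p) (hq : 0 ≤ q) (hr : 0 ≤ r) (ht : 0 ≤ t) :
    p * q + r * t ≤ Real.sqrt (p ^ 2 + r ^ 2) * Real.sqrt (q ^ 2 + t ^ 2) := by
  rw [← Real.sqrt_mul (by positivity)]
  rw [show p * q + r * t ≤ Real.sqrt ((p ^ 2 + r ^ 2) * (q ^ 2 + t ^ 2)) ↔ _ from
    Real.le_sqrt (by positivity) (by positivity)]
  nlinarith [sq_nonneg (p * t - r * q)]

/-- The form `b` is bounded by the energy norm. -/
lemma b_cs {L M : Type*} [NormedAddCommGroup L] [InnerProductSpace ℝ L]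
    [NormedAddCommGroup M] [InnerProductSpace ℝ M]
    (ω : ℝ) (hω : 0 ≤ ω) (C : L →ₗ[ℝ] M) (a b : L) :
    |(-ω ^ 2 * ⟪a, b⟫ + ⟪C a, C b⟫)| ≤ tnorm ω C a * tnorm ω C b := by
  have h1 : |⟪a, b⟫| ≤ ‖a‖ * ‖b‖ := abs_real_inner_le_norm a b
  have h2 : |⟪C a, C b⟫| ≤ ‖C a‖ * ‖C b‖ := abs_real_inner_le_norm _ _
  have h3 := cs2 (ω * ‖a‖) (ω * ‖b‖) ‖C a‖ ‖C b‖ (by positivity) (by positivity)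
    (norm_nonneg _) (norm_nonneg _)
  have e1 : (ω * ‖a‖) ^ 2 + ‖C a‖ ^ 2 = ω ^ 2 * ‖a‖ ^ 2 + ‖C a‖ ^ 2 := by ring
  have e2 : (ω * ‖b‖) ^ 2 + ‖C b‖ ^ 2 = ω ^ 2 * ‖b‖ ^ 2 + ‖C b‖ ^ 2 := by ring
  rw [e1, e2] at h3
  have h4 : |(-ω ^ 2 * ⟪a, b⟫ + ⟪C a, C b⟫)| ≤ ω ^ 2 * |⟪a, b⟫| + |⟪C a, C b⟫| := by
    calc |(-ω ^ 2 * ⟪a, b⟫ + ⟪C a, C b⟫)| ≤ |(-ω ^ 2 * ⟪a, b⟫)| + |⟪C a, C b⟫| := abs_add_le _ _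
    _ = ω ^ 2 * |⟪a, b⟫| + |⟪C a, C b⟫| := by rw [abs_mul, abs_of_nonpos (neg_nonpos.mpr (sq_nonneg ω))]; ring_nf
  unfold tnorm
  nlinarith [abs_nonneg ⟪a, b⟫, sq_nonneg ω]

lemma cancel_mul (a b R : ℝ) (hb : 0 < b) (h : a * b ^ 2 ≤ b * R) : a * b ≤ R := by
  nlinarith


set_option maxHeartbeats 1600000 in
/-- Pure real-arithmetic final estimate. -/
lemma final_est (γp γd γdiv ρi CC S N T PK TH E : ℝ)
    (hγp : 0 ≤ γp) (hγd : 0 ≤ γd) (hγdiv : 0 ≤ γdiv) (hρi : 0 ≤ ρi)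
    (hCC : 0 ≤ CC) (hS : 0 ≤ S) (hN : 0 ≤ N) (hT : 0 ≤ T)
    (heq : CC + S = E)
    (hpyth : E = PK + TH)
    (hN2 : N ^ 2 ≤ ρi * S)
    (hT2 : T ^ 2 = E + CC)
    (hdiv2 : PK ≤ γdiv ^ 2 * (CC + N ^ 2))
    (hth2 : TH ≤ (γd * N + γp * T) ^ 2)
    (hcγ : 8 * max (γp ^ 2) (ρi * γd ^ 2) + max 1 ρi * (γdiv + 3 * γdiv ^ 2) < 1) :
    E ≤ 0 := by
  have hE : 0 ≤ E := by linarith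
  set m1 := max (γp ^ 2) (ρi * γd ^ 2) with hm1
  set m2 := max 1 ρi with hm2
  have hm1a : γp ^ 2 ≤ m1 := le_max_left _ _
  have hm1b : ρi * γd ^ 2 ≤ m1 := le_max_right _ _
  have hm1nn : 0 ≤ m1 := le_trans (sq_nonneg _) hm1a
  have hm2a : (1 : ℝ) ≤ m2 := le_max_left _ _
  have hm2b : ρi ≤ m2 := le_max_right _ _
  have hm2nn : (0 : ℝ) ≤ m2 := le_trans zero_le_one hm2a
  have hSX : S ≤ E := by linarith
  have hcX : CC ≤ E := by linarith
  have hTb : T ^ 2 ≤ 2 * E := by linarith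
  have h2 : γd ^ 2 * N ^ 2 ≤ m1 * E := by
    nlinarith [mul_le_mul_of_nonneg_left hN2 (sq_nonneg γd),
      mul_le_mul_of_nonneg_right hm1b hS, mul_le_mul_of_nonneg_left hSX hm1nn]
  have h3 : γp ^ 2 * T ^ 2 ≤ 2 * m1 * E := by
    nlinarith [mul_le_mul_of_nonneg_left hTb (sq_nonneg γp),
      mul_le_mul_of_nonneg_right hm1a (by linarith : (0:ℝ) ≤ 2 * E)]
  have hth : TH ≤ 8 * m1 * E := by
    nlinarith [sq_nonneg (γd * N - γp * T), mul_nonneg hm1nn hE]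
  have hE' : m2 * E = m2 * CC + m2 * S := by rw [← heq]; ring
  have hcn : CC + N ^ 2 ≤ m2 * E := by
    nlinarith [mul_le_mul_of_nonneg_right hm2b hS,
      mul_nonneg (by linarith : (0:ℝ) ≤ m2 - 1) hCC]
  have h4 : γdiv ^ 2 * (CC + N ^ 2) ≤ γdiv ^ 2 * (m2 * E) :=
    mul_le_mul_of_nonneg_left hcn (sq_nonneg γdiv)
  have h6 : 0 ≤ (γdiv + 2 * γdiv ^ 2) * (m2 * E) :=
    mul_nonneg (by nlinarith) (mul_nonneg hm2nn hE)
  have hpk : PK ≤ m2 * (γdiv + 3 * γdiv ^ 2) * E := by nlinarith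
  nlinarith [hpyth, hth, hpk, hE]

set_option maxHeartbeats 2000000 in
/-- Kernel of the discrete problem is trivial. -/
theorem kernel_zero
    {L M : Type*} [NormedAddCommGroup L] [InnerProductSpace ℝ L]
    [NormedAddCommGroup M] [InnerProductSpace ℝ M]
    (ω : ℝ) (hω : 0 < ω)
    (V Vh : Submodule ℝ L)
    (C : L →ₗ[ℝ] M)
    (s : L →ₗ[ℝ] L →ₗ[ℝ] ℝ)
    (hs_pos : ∀ v : L, 0 ≤ s v v)
    (hs_conf : ∀ v w : L, v ∈ V ∨ w ∈ V → s v w = 0)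
    (nc : L → ℝ)
    (hnc_nonneg : ∀ v : L, 0 ≤ nc v)
    (projK : L →ₗ[ℝ] L)
    (hprojK_mem : ∀ v : L, projK v ∈ V ∧ C (projK v) = 0)
    (hprojK_orth : ∀ v : L, ∀ w ∈ V, C w = 0 → ⟪v - projK v, w⟫ = 0)
    (projKh : L →ₗ[ℝ] L)
    (hprojKh_mem : ∀ v : L, projKh v ∈ Vh ⊓ V ∧ C (projKh v) = 0)
    (hprojKh_orth : ∀ v : L, ∀ w ∈ Vh ⊓ V, C w = 0 → ⟪v - projKh v, w⟫ = 0)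
    (γp γd : ℝ) (hγp : 0 ≤ γp) (hγd : 0 ≤ γd)
    (hadj : ∀ θ : L, (∀ w ∈ V, C w = 0 → ⟪θ, w⟫ = 0) →
      ∃ ζ ∈ V, (∀ w ∈ V, -ω ^ 2 * ⟪w, ζ⟫ + ⟪C w, C ζ⟫ = ⟪w, θ⟫) ∧
        sInf {t : ℝ | ∃ v ∈ Vh ⊓ V, t = ω * tnorm ω C (ζ - v)} ≤ γp * ‖θ‖ ∧
        ∀ wh ∈ Vh,
          ω * |⟪wh, θ⟫ - (-ω ^ 2 * ⟪wh, ζ⟫ + ⟪C wh, C ζ⟫ + s wh ζ)| ≤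
            γd * ‖θ‖ * nc wh)
    (γdiv : ℝ) (hγdiv : 0 ≤ γdiv)
    (hdiv : ∀ vh ∈ Vh, projKh vh = 0 →
      ω * ‖projK vh‖ ≤ γdiv * Real.sqrt (‖C vh‖ ^ 2 + nc vh ^ 2))
    (ρ : ℝ) (hρ : 0 < ρ)
    (hρs : ∀ vh ∈ Vh, ρ * nc vh ≤ Real.sqrt (s vh vh))
    (hcγ : 8 * max (γp ^ 2) (ρ⁻¹ ^ 2 * γd ^ 2) +
        max 1 (ρ⁻¹ ^ 2) * (γdiv + 3 * γdiv ^ 2) < 1)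
    (Eh : L) (hEhVh : Eh ∈ Vh)
    (h0 : ∀ wh ∈ Vh, -ω ^ 2 * ⟪Eh, wh⟫ + ⟪C Eh, C wh⟫ + s Eh wh = 0) :
    Eh = 0 := by
  -- Step 1: testing with Eh itself
  have hself := h0 Eh hEhVh
  rw [real_inner_self_eq_norm_sq, real_inner_self_eq_norm_sq] at hself
  have heq : ‖C Eh‖ ^ 2 + s Eh Eh = ω ^ 2 * ‖Eh‖ ^ 2 := by linarith
  -- Step 2: projKh Eh = 0
  have hpmem := hprojKh_mem Eh
  have hp0 : projKh Eh = 0 := by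
    set p := projKh Eh with hp
    have hpVh : p ∈ Vh := (Submodule.mem_inf.mp hpmem.1).1
    have hpV : p ∈ V := (Submodule.mem_inf.mp hpmem.1).2
    have h1 := h0 p hpVh
    rw [hpmem.2] at h1
    simp only [inner_zero_right] at h1
    have hsEp : s Eh p = 0 := hs_conf Eh p (Or.inr hpV)
    have hip : ⟪Eh, p⟫ = 0 := by
      have h2 : ω ^ 2 * ⟪Eh, p⟫ = 0 := by rw [hsEp] at h1; linarith
      exact (mul_eq_zero.mp h2).resolve_left (pow_ne_zero 2 hω.ne')
    have horth := hprojKh_orth Eh p hpmem.1 hpmem.2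
    rw [inner_sub_left] at horth
    have : ⟪p, p⟫ = 0 := by rw [← hp] at horth; linarith
    exact inner_self_eq_zero.mp this
  -- Step 3: divergence bound
  have hdivE := hdiv Eh hEhVh hp0
  -- Step 4: set θ
  set θ := Eh - projK Eh with hθ
  have hKmem := hprojK_mem Eh
  have hθperp : ∀ w ∈ V, C w = 0 → ⟪θ, w⟫ = 0 := fun w hw hcw => hprojK_orth Eh w hw hcw
  have hθK : ⟪θ, projK Eh⟫ = 0 := hθperp _ hKmem.1 hKmem.2
  -- Pythagoras
  have hsum : projK Eh + θ = Eh := by rw [hθ]; abel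
  have hz : ⟪projK Eh, θ⟫ = 0 := by rw [real_inner_comm]; exact hθK
  have hpyth : ‖Eh‖ ^ 2 = ‖projK Eh‖ ^ 2 + ‖θ‖ ^ 2 := by
    have h := norm_add_sq_real (projK Eh) θ
    rw [hsum, hz] at h
    linarith
  have hEθ : ⟪Eh, θ⟫ = ‖θ‖ ^ 2 := by
    calc ⟪Eh, θ⟫ = ⟪projK Eh + θ, θ⟫ := by rw [hsum]
      _ = ⟪projK Eh, θ⟫ + ⟪θ, θ⟫ := inner_add_left _ _ _
      _ = ‖θ‖ ^ 2 := by rw [hz, real_inner_self_eq_norm_sq]; ring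
  -- Step 5: duality bound on θ
  obtain ⟨ζ, hζV, _, hζinf, hζcons⟩ := hadj θ hθperp
  have hsEζ : s Eh ζ = 0 := hs_conf Eh ζ (Or.inr hζV)
  set Bv : ℝ := -ω ^ 2 * ⟪Eh, ζ⟫ + ⟪C Eh, C ζ⟫ + s Eh ζ with hBv
  have hA := hζcons Eh hEhVh
  -- ω * |Bv| ≤ tnorm Eh * t for all t in the inf set
  set Sset := {t : ℝ | ∃ v ∈ Vh ⊓ V, t = ω * tnorm ω C (ζ - v)} with hSset
  have hkey : ∀ t ∈ Sset, ω * |Bv| ≤ tnorm ω C Eh * t := by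
    rintro t ⟨v, hv, rfl⟩
    have hvVh : v ∈ Vh := (Submodule.mem_inf.mp hv).1
    have hvV : v ∈ V := (Submodule.mem_inf.mp hv).2
    have h0v := h0 v hvVh
    have hsEv : s Eh v = 0 := hs_conf Eh v (Or.inr hvV)
    have hBveq : Bv = -ω ^ 2 * ⟪Eh, ζ - v⟫ + ⟪C Eh, C (ζ - v)⟫ := by
      rw [hBv, hsEζ, inner_sub_right, map_sub, inner_sub_right]
      linear_combination h0v - hsEv
    have hcs := b_cs ω hω.le C Eh (ζ - v)
    rw [← hBveq] at hcs
    calc ω * |Bv| ≤ ω * (tnorm ω C Eh * tnorm ω C (ζ - v)) := by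
          apply mul_le_mul_of_nonneg_left hcs hω.le
      _ = tnorm ω C Eh * (ω * tnorm ω C (ζ - v)) := by ring
  have hSne : Sset.Nonempty := ⟨ω * tnorm ω C (ζ - 0), 0, Submodule.zero_mem _, rfl⟩
  have hBbound : ω * |Bv| ≤ tnorm ω C Eh * (γp * ‖θ‖) := by
    have hTnn := tnorm_nonneg ω C Eh
    rcases eq_or_lt_of_le hTnn with hT | hT
    · obtain ⟨t0, ht0⟩ := hSne
      have := hkey t0 ht0
      rw [← hT] at this ⊢
      simpa using this
    · have h1 : ω * |Bv| / tnorm ω C Eh ≤ sInf Sset := by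
        apply le_csInf hSne
        intro t ht
        rw [div_le_iff₀ hT]
        calc ω * |Bv| ≤ tnorm ω C Eh * t := hkey t ht
          _ = t * tnorm ω C Eh := by ring
      have h2 : ω * |Bv| ≤ sInf Sset * tnorm ω C Eh := (div_le_iff₀ hT).mp h1
      calc ω * |Bv| ≤ sInf Sset * tnorm ω C Eh := h2
        _ ≤ (γp * ‖θ‖) * tnorm ω C Eh := by
            apply mul_le_mul_of_nonneg_right hζinf hTnn
        _ = tnorm ω C Eh * (γp * ‖θ‖) := by ring
  -- combine: ω * ‖θ‖² ≤ γd ‖θ‖ nc Eh + tnorm Eh * γp ‖θ‖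
  have hθ2 : ω * ‖θ‖ ^ 2 ≤ γd * ‖θ‖ * nc Eh + tnorm ω C Eh * (γp * ‖θ‖) := by
    have e : ω * ‖θ‖ ^ 2 = ω * (⟪Eh, θ⟫ - Bv) + ω * Bv := by rw [hEθ]; ring
    rw [e]
    have h1 : ω * (⟪Eh, θ⟫ - Bv) ≤ ω * |⟪Eh, θ⟫ - Bv| :=
      mul_le_mul_of_nonneg_left (le_abs_self _) hω.le
    have h2 : ω * Bv ≤ ω * |Bv| := mul_le_mul_of_nonneg_left (le_abs_self _) hω.le
    linarith [hA]
  have hθb : ω * ‖θ‖ ≤ γd * nc Eh + γp * tnorm ω C Eh := by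
    rcases eq_or_lt_of_le (norm_nonneg θ) with h | h
    · rw [← h, mul_zero]
      exact add_nonneg (mul_nonneg hγd (hnc_nonneg Eh)) (mul_nonneg hγp (tnorm_nonneg ω C Eh))
    · have hrw : γd * ‖θ‖ * nc Eh + tnorm ω C Eh * (γp * ‖θ‖) =
          ‖θ‖ * (γd * nc Eh + γp * tnorm ω C Eh) := by ring
      rw [hrw] at hθ2
      exact cancel_mul ω ‖θ‖ _ h hθ2
  -- Step 6: final algebra
  have hSnn : 0 ≤ s Eh Eh := hs_pos Eh
  have hnnn : 0 ≤ nc Eh := hnc_nonneg Eh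
  have hρi : (0:ℝ) ≤ ρ⁻¹ ^ 2 := by positivity
  have hn2 : nc Eh ^ 2 ≤ ρ⁻¹ ^ 2 * s Eh Eh := by
    have h1 := hρs Eh hEhVh
    have h2 : (ρ * nc Eh) ^ 2 ≤ Real.sqrt (s Eh Eh) ^ 2 :=
      pow_le_pow_left₀ (mul_nonneg hρ.le hnnn) h1 2
    rw [Real.sq_sqrt hSnn] at h2
    have h3 := mul_le_mul_of_nonneg_left h2 hρi
    have h5 : ρ⁻¹ ^ 2 * ρ ^ 2 = 1 := by field_simp
    calc nc Eh ^ 2 = ρ⁻¹ ^ 2 * ρ ^ 2 * nc Eh ^ 2 := by rw [h5, one_mul]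
      _ = ρ⁻¹ ^ 2 * (ρ * nc Eh) ^ 2 := by ring
      _ ≤ ρ⁻¹ ^ 2 * s Eh Eh := h3
  have hdiv2 : ω ^ 2 * ‖projK Eh‖ ^ 2 ≤ γdiv ^ 2 * (‖C Eh‖ ^ 2 + nc Eh ^ 2) := by
    have h1 := pow_le_pow_left₀ (by positivity : 0 ≤ ω * ‖projK Eh‖) hdivE 2
    rw [mul_pow, mul_pow, Real.sq_sqrt (by positivity)] at h1
    exact h1
  have hθb2 : ω ^ 2 * ‖θ‖ ^ 2 ≤ (γd * nc Eh + γp * tnorm ω C Eh) ^ 2 := by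
    have h1 := pow_le_pow_left₀ (by positivity : 0 ≤ ω * ‖θ‖) hθb 2
    rw [mul_pow] at h1
    exact h1
  have hpyth' : ω ^ 2 * ‖Eh‖ ^ 2 = ω ^ 2 * ‖projK Eh‖ ^ 2 + ω ^ 2 * ‖θ‖ ^ 2 := by
    rw [hpyth]; ring
  have hT2 : tnorm ω C Eh ^ 2 = ω ^ 2 * ‖Eh‖ ^ 2 + ‖C Eh‖ ^ 2 := tnorm_sq ω C Eh
  have hE0 : ω ^ 2 * ‖Eh‖ ^ 2 ≤ 0 :=
    final_est γp γd γdiv (ρ⁻¹ ^ 2) (‖C Eh‖ ^ 2) (s Eh Eh) (nc Eh) (tnorm ω C Eh)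
      (ω ^ 2 * ‖projK Eh‖ ^ 2) (ω ^ 2 * ‖θ‖ ^ 2) (ω ^ 2 * ‖Eh‖ ^ 2)
      hγp hγd hγdiv hρi (by positivity) hSnn hnnn (tnorm_nonneg ω C Eh)
      heq hpyth' hn2 hT2 hdiv2 hθb2 hcγ
  have h1 : ‖Eh‖ ^ 2 = 0 := by
    have h3 : 0 ≤ ω ^ 2 * ‖Eh‖ ^ 2 := by positivity
    have h4 : ω ^ 2 * ‖Eh‖ ^ 2 = 0 := le_antisymm hE0 h3
    exact (mul_eq_zero.mp h4).resolve_left (pow_ne_zero 2 hω.ne')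
  exact norm_eq_zero.mp (sq_eq_zero_iff.mp h1)
/-- **Well-posedness of the discrete problem.**
If `V_h` is finite-dimensional and
`c_γ := 8 max(γ_p², ρ⁻² γ_d²) + max(1, ρ⁻²)(γ_div + 3 γ_div²) < 1`, then for every
linear functional `F : V_h → ℝ` there is a unique `E_h ∈ V_h` with
`b♯(E_h, w_h) = F(w_h)` for all `w_h ∈ V_h`; in particular the only `E_h ∈ V_h` with
`b♯(E_h, ·) = 0` on `V_h` is `E_h = 0`. -/
theorem discrete_well_posedness
    {L M : Type*} [NormedAddCommGroup L] [InnerProductSpace ℝ L]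
    [NormedAddCommGroup M] [InnerProductSpace ℝ M]
    (ω : ℝ) (hω : 0 < ω)
    (Vs V Vh : Submodule ℝ L) (hVVs : V ≤ Vs) (hVhVs : Vh ≤ Vs)
    [FiniteDimensional ℝ Vh]
    (C : L →ₗ[ℝ] M)
    (s : L →ₗ[ℝ] L →ₗ[ℝ] ℝ)
    (hs_symm : ∀ v w : L, s v w = s w v)
    (hs_pos : ∀ v : L, 0 ≤ s v v)
    (hs_conf : ∀ v w : L, v ∈ V ∨ w ∈ V → s v w = 0)
    (nc : L → ℝ)
    (hnc_nonneg : ∀ v : L, 0 ≤ nc v)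
    (hnc_add : ∀ v w : L, nc (v + w) ≤ nc v + nc w)
    (hnc_smul : ∀ (c : ℝ) (v : L), nc (c • v) = |c| * nc v)
    (hnc_conf : ∀ v ∈ V, nc v = 0)
    (projK : L →ₗ[ℝ] L)
    (hprojK_mem : ∀ v : L, projK v ∈ V ∧ C (projK v) = 0)
    (hprojK_orth : ∀ v : L, ∀ w ∈ V, C w = 0 → ⟪v - projK v, w⟫ = 0)
    (projKh : L →ₗ[ℝ] L)
    (hprojKh_mem : ∀ v : L, projKh v ∈ Vh ⊓ V ∧ C (projKh v) = 0)
    (hprojKh_orth : ∀ v : L, ∀ w ∈ Vh ⊓ V, C w = 0 → ⟪v - projKh v, w⟫ = 0)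
    (γp γd : ℝ) (hγp : 0 ≤ γp) (hγd : 0 ≤ γd)
    (hadj : ∀ θ : L, (∀ w ∈ V, C w = 0 → ⟪θ, w⟫ = 0) →
      ∃ ζ ∈ V, (∀ w ∈ V, -ω ^ 2 * ⟪w, ζ⟫ + ⟪C w, C ζ⟫ = ⟪w, θ⟫) ∧
        sInf {t : ℝ | ∃ v ∈ Vh ⊓ V, t = ω * tnorm ω C (ζ - v)} ≤ γp * ‖θ‖ ∧
        ∀ wh ∈ Vh,
          ω * |⟪wh, θ⟫ - (-ω ^ 2 * ⟪wh, ζ⟫ + ⟪C wh, C ζ⟫ + s wh ζ)| ≤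
            γd * ‖θ‖ * nc wh)
    (γdiv : ℝ) (hγdiv : 0 ≤ γdiv)
    (hdiv : ∀ vh ∈ Vh, projKh vh = 0 →
      ω * ‖projK vh‖ ≤ γdiv * Real.sqrt (‖C vh‖ ^ 2 + nc vh ^ 2))
    (P : L →ₗ[ℝ] L)
    (hP_mem : ∀ v : L, P v ∈ Vh)
    (hP_orth : ∀ v : L, ∀ wh ∈ Vh,
      ω ^ 2 * ⟪v - P v, wh⟫ + ⟪C (v - P v), C wh⟫ + s (v - P v) wh = 0)
    (ρ : ℝ) (hρ : 0 < ρ)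
    (hρs : ∀ vh ∈ Vh, ρ * nc vh ≤ Real.sqrt (s vh vh))
    (hcγ : 8 * max (γp ^ 2) (ρ⁻¹ ^ 2 * γd ^ 2) +
        max 1 (ρ⁻¹ ^ 2) * (γdiv + 3 * γdiv ^ 2) < 1) :
    (∀ F : Vh →ₗ[ℝ] ℝ, ∃! Eh : Vh, ∀ wh : Vh,
      -ω ^ 2 * ⟪(Eh : L), (wh : L)⟫ + ⟪C (Eh : L), C (wh : L)⟫ +
        s (Eh : L) (wh : L) = F wh) ∧
    (∀ Eh ∈ Vh, (∀ wh ∈ Vh,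
        -ω ^ 2 * ⟪Eh, wh⟫ + ⟪C Eh, C wh⟫ + s Eh wh = 0) → Eh = 0) := by
  have hker : ∀ Eh ∈ Vh, (∀ wh ∈ Vh,
      -ω ^ 2 * ⟪Eh, wh⟫ + ⟪C Eh, C wh⟫ + s Eh wh = 0) → Eh = 0 := by
    intro Eh hEh h0
    exact kernel_zero ω hω V Vh C s hs_pos hs_conf nc hnc_nonneg projK hprojK_mem
      hprojK_orth projKh hprojKh_mem hprojKh_orth γp γd hγp hγd hadj γdiv hγdiv hdiv
      ρ hρ hρs hcγ Eh hEh h0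
  refine ⟨?_, hker⟩
  -- build the linear map T : Vh → Dual Vh
  let T : Vh →ₗ[ℝ] (Vh →ₗ[ℝ] ℝ) :=
    LinearMap.mk₂ ℝ
      (fun x y : Vh => -ω ^ 2 * ⟪(x : L), (y : L)⟫ + ⟪C (x : L), C (y : L)⟫ +
        s (x : L) (y : L))
      (by intro x x' y
          simp [inner_add_left, map_add, LinearMap.add_apply]; ring)
      (by intro c x y
          simp [real_inner_smul_left, map_smul, LinearMap.smul_apply, smul_eq_mul]; ring)
      (by intro x y y'
          simp [inner_add_right, map_add]; ring)
      (by intro c x y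
          simp [real_inner_smul_right, map_smul, smul_eq_mul]; ring)
  have hTapp : ∀ (x y : Vh), T x y = -ω ^ 2 * ⟪(x : L), (y : L)⟫ +
      ⟪C (x : L), C (y : L)⟫ + s (x : L) (y : L) := fun x y => rfl
  have hinj : Function.Injective T := by
    rw [← LinearMap.ker_eq_bot]
    rw [LinearMap.ker_eq_bot']
    intro x hx
    apply Subtype.ext
    apply hker x.1 x.2
    intro wh hwh
    have := LinearMap.congr_fun hx ⟨wh, hwh⟩
    rw [hTapp] at this
    simpa using this
  have hfr : Module.finrank ℝ Vh = Module.finrank ℝ (Vh →ₗ[ℝ] ℝ) :=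
    (Subspace.dual_finrank_eq (K := ℝ) (V := Vh)).symm
  have hsurj : Function.Surjective T :=
    (LinearMap.injective_iff_surjective_of_finrank_eq_finrank hfr).mp hinj
  intro F
  obtain ⟨Eh, hEh⟩ := hsurj F
  refine ⟨Eh, ?_, ?_⟩
  · intro wh
    rw [← hTapp, hEh]
  · intro y hy
    apply hinj
    rw [hEh]
    ext wh
    rw [hTapp]
    exact hy wh
end
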